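/- Let K = [0,1] × {0,1} be the split interval (lexicographic order, order topology), let ε > 0, let B ⊆ (0,1) be a set such that every point of B is a limit of points of B both from the right and from the left, and let d : K × K → [0,∞) be a symmetric map with d((x,0),(x,1)) > ε for every x ∈ B. Then the subset B × {0,1} of K contains no nonempty relatively open subset of d-diameter less than ε; that is, for every open set U of K with U ∩ (B × {0,1}) nonempty, there exist points p,q ∈ U ∩ (B × {0,1}) with d(p,q) ≥ ε. -/

import Mathlib

universe u

open Set Topology

/-- A quasi metric: symmetric, nonnegative, vanishing exactly on the diagonal
(the triangle inequality may fail). -/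
def IsQuasiMetric {K : Type u} (d : K → K → ℝ) : Prop :=
  (∀ x y, 0 ≤ d x y) ∧ (∀ x y, d x y = d y x) ∧ (∀ x y, d x y = 0 ↔ x = y)

/-- `d` fragments `K`: every nonempty closed set has a relatively open nonempty
subset of `d`-diameter less than any prescribed `ε > 0`. -/
def Fragments {K : Type u} [TopologicalSpace K] (d : K → K → ℝ) : Prop :=
  ∀ L : Set K, L.Nonempty → IsClosed L → ∀ ε : ℝ, 0 < ε →
    ∃ U : Set K, IsOpen U ∧ (U ∩ L).Nonempty ∧
      ∀ x ∈ U ∩ L, ∀ y ∈ U ∩ L, d x y < ε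

/-- `K` is almost totally disconnected: it embeds into `[0,1]^Γ` so that every
point has all but countably many coordinates in `{0,1}`. -/
def AlmostTotallyDisconnected (K : Type u) [TopologicalSpace K] : Prop :=
  ∃ (Γ : Type u) (f : K → Γ → ℝ),
    Topology.IsEmbedding f ∧
    (∀ x γ, f x γ ∈ Set.Icc (0:ℝ) 1) ∧
    (∀ x : K, {γ : Γ | f x γ ∉ ({0, 1} : Set ℝ)}.Countable)

/-- The split interval: `[0,1] × {0,1}` with the lexicographic order. -/
abbrev SplitInterval : Type := Lex (Set.Icc (0:ℝ) 1 × Bool)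

/-- The order topology on the split interval. -/
noncomputable instance : TopologicalSpace SplitInterval := Preorder.topology SplitInterval

instance : OrderTopology SplitInterval := ⟨rfl⟩

/-- If every point of `B ⊆ (0,1)` is a two-sided limit of `B` and `d` splits the two
copies of each point of `B` at distance more than `ε`, then `B × {0,1}` has no
nonempty relatively open subset of `d`-diameter less than `ε`. -/
theorem splitInterval_no_small_open_subset
    (ε : ℝ) (hε : 0 < ε) (B : Set ℝ) (hB : B ⊆ Set.Ioo (0:ℝ) 1)
    (hlim : ∀ x ∈ B, ∀ δ : ℝ, 0 < δ →
      (∃ b ∈ B, x - δ < b ∧ b < x) ∧ (∃ b' ∈ B, x < b' ∧ b' < x + δ))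
    (d : SplitInterval → SplitInterval → ℝ)
    (hnonneg : ∀ p q, 0 ≤ d p q) (hsymm : ∀ p q, d p q = d q p)
    (hd : ∀ x : Set.Icc (0:ℝ) 1, (x : ℝ) ∈ B →
      ε < d (toLex (x, false)) (toLex (x, true))) :
    ∀ U : Set SplitInterval, IsOpen U →
      (U ∩ {p : SplitInterval | ((ofLex p).1 : ℝ) ∈ B}).Nonempty →
      ∃ p ∈ U ∩ {p : SplitInterval | ((ofLex p).1 : ℝ) ∈ B},
        ∃ q ∈ U ∩ {p : SplitInterval | ((ofLex p).1 : ℝ) ∈ B}, ε ≤ d p q := by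
  intro U hU ⟨p0, hp0U, hp0B⟩
  set x : Set.Icc (0:ℝ) 1 := (ofLex p0).1 with hxdef
  have hxB : (x : ℝ) ∈ B := hp0B
  have hx01 : (x : ℝ) ∈ Set.Ioo (0:ℝ) 1 := hB hxB
  have hp0 : p0 = toLex (x, (ofLex p0).2) := rfl
  have hlow : ∃ l : SplitInterval, l < p0 := by
    refine ⟨toLex (⟨0, by norm_num, by norm_num⟩, false), ?_⟩
    rw [hp0, Prod.Lex.lt_iff]
    exact Or.inl (by exact_mod_cast hx01.1)
  have hhigh : ∃ u : SplitInterval, p0 < u := by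
    refine ⟨toLex (⟨1, by norm_num, by norm_num⟩, true), ?_⟩
    rw [hp0, Prod.Lex.lt_iff]
    exact Or.inl (by exact_mod_cast hx01.2)
  obtain ⟨l, u, ⟨hl, hu⟩, hsub⟩ :=
    (mem_nhds_iff_exists_Ioo_subset' hlow hhigh).1 (hU.mem_nhds hp0U)
  have hl' : (ofLex l).1 < x ∨ (ofLex l).1 = x ∧ (ofLex l).2 < (ofLex p0).2 := by
    have := hl; rw [hp0] at this
    have : toLex (ofLex l) < toLex (x, (ofLex p0).2) := this
    exact Prod.Lex.lt_iff.1 this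
  -- helper to conclude given y ∈ B with both copies in Ioo l u
  have key : ∀ y : Set.Icc (0:ℝ) 1, (y:ℝ) ∈ B →
      toLex (y, false) ∈ Set.Ioo l u → toLex (y, true) ∈ Set.Ioo l u →
      ∃ p ∈ U ∩ {p : SplitInterval | ((ofLex p).1 : ℝ) ∈ B},
        ∃ q ∈ U ∩ {p : SplitInterval | ((ofLex p).1 : ℝ) ∈ B}, ε ≤ d p q := by
    intro y hyB h0 h1
    exact ⟨toLex (y, false), ⟨hsub h0, hyB⟩, toLex (y, true), ⟨hsub h1, hyB⟩,
      le_of_lt (hd y hyB)⟩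
  rcases hl' with hlt | ⟨heq, hblt⟩
  · -- pick y ∈ B with l.1 < y < x
    obtain ⟨⟨b, hbB, hb1, hb2⟩, -⟩ := hlim x hxB ((x:ℝ) - (ofLex l).1)
      (by simpa using sub_pos.2 (show ((ofLex l).1 : ℝ) < x from hlt))
    have hb01 := hB hbB
    set y : Set.Icc (0:ℝ) 1 := ⟨b, le_of_lt hb01.1, le_of_lt hb01.2⟩ with hydef
    have hly : ((ofLex l).1 : ℝ) < y := by show ((ofLex l).1 : ℝ) < b; linarith
    have hyx : (y:ℝ) < x := hb2
    have hlty : ∀ c : Bool, l < toLex (y, c) := by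
      intro c
      have : toLex (ofLex l) < toLex (y, c) := by
        rw [Prod.Lex.lt_iff]; exact Or.inl (by exact_mod_cast hly)
      exact this
    have hytu : ∀ c : Bool, toLex (y, c) < u := by
      intro c
      refine lt_trans ?_ hu
      rw [hp0, Prod.Lex.lt_iff]
      exact Or.inl (by exact_mod_cast hyx)
    exact key y hbB ⟨hlty false, hytu false⟩ ⟨hlty true, hytu true⟩
  · -- l = (x, false), p0 = (x, true); go right
    have hxu : (x : ℝ) < (ofLex u).1 := by
      have : toLex (x, (ofLex p0).2) < toLex (ofLex u) := by rw [← hp0]; exact hu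
      rcases Prod.Lex.lt_iff.1 this with h | ⟨-, h2⟩
      · exact_mod_cast h
      · exfalso
        have : (ofLex p0).2 = true := by
          cases h : (ofLex p0).2
          · exact absurd (h ▸ hblt) (by simp [Bool.lt_iff])
          · rfl
        rw [this] at h2; exact absurd h2 (by simp)
    obtain ⟨-, ⟨b, hbB, hb1, hb2⟩⟩ := hlim x hxB (((ofLex u).1 : ℝ) - x)
      (sub_pos.2 hxu)
    have hb01 := hB hbB
    set y : Set.Icc (0:ℝ) 1 := ⟨b, le_of_lt hb01.1, le_of_lt hb01.2⟩ with hydef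
    have hxy : (x:ℝ) < y := hb1
    have hyu : (y:ℝ) < (ofLex u).1 := by show b < ((ofLex u).1 : ℝ); linarith
    have hlty : ∀ c : Bool, l < toLex (y, c) := by
      intro c
      have : toLex (ofLex l) < toLex (y, c) := by
        rw [Prod.Lex.lt_iff]
        exact Or.inl (show (ofLex l).1 < y by
          rw [heq]; exact_mod_cast hxy)
      exact this
    have hytu : ∀ c : Bool, toLex (y, c) < u := by
      intro c
      have : toLex (y, c) < toLex (ofLex u) := by
        rw [Prod.Lex.lt_iff]; exact Or.inl (by exact_mod_cast hyu)
      exact this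
    exact key y hbB ⟨hlty false, hytu false⟩ ⟨hlty true, hytu true⟩
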